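/- Let ε > 0 and consider two probability mass functions on {0,1}: p = (1/2 + δ, 1/2 − δ) and q = (1/2, 1/2) with 0 < δ < 1/2. The Kantorovich optimal transport plan is π*(0,0) = 1/2, π*(1,1) = 1/2 − δ, π*(0,1) = δ, π*(1,0) = 0. Then the unique θ̂ > 0 solving ∑_x (exp(|x − 1|/θ̂) − exp(ε)) π*(x, 1) = 0 is θ̂ = 1/ln(exp(ε) + (exp(ε) − 1)·(1/2 − δ)/δ), and θ̂ < 1/ε. -/

import Mathlib

theorem binary_example_closed_form
    (ε δ : ℝ) (hε : 0 < ε) (hδ : 0 < δ) (hδ2 : δ < 1 / 2)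
    (π : ℕ → ℕ → ℝ)
    (hπ : π = fun x y =>
      if x = 0 ∧ y = 0 then 1 / 2
      else if x = 1 ∧ y = 1 then 1 / 2 - δ
      else if x = 0 ∧ y = 1 then δ
      else 0)
    (θhat : ℝ)
    (hθhat : θhat = 1 / Real.log (Real.exp ε + (Real.exp ε - 1) * (1 / 2 - δ) / δ)) :
    (∀ θ : ℝ, 0 < θ →
      ((∑ x ∈ Finset.range 2,
          (Real.exp (|(x : ℝ) - 1| / θ) - Real.exp ε) * π x 1) = 0 ↔ θ = θhat)) ∧
    θhat < 1 / ε := by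
  set A : ℝ := Real.exp ε + (Real.exp ε - 1) * (1 / 2 - δ) / δ with hAdef
  have hexp : 1 < Real.exp ε := by nlinarith [Real.add_one_le_exp ε]
  have hpos : 0 < (Real.exp ε - 1) * (1 / 2 - δ) / δ := by
    apply div_pos (mul_pos (by linarith) (by linarith)) hδ
  have hA1 : Real.exp ε < A := by simp [hAdef]; linarith
  have hA0 : 0 < A := lt_trans (Real.exp_pos ε) hA1
  have hLε : ε < Real.log A := (Real.lt_log_iff_exp_lt hA0).mpr hA1
  have hL0 : 0 < Real.log A := lt_trans hε hLε
  constructor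
  · intro θ hθ
    have hsum : (∑ x ∈ Finset.range 2,
        (Real.exp (|(x : ℝ) - 1| / θ) - Real.exp ε) * π x 1)
        = (Real.exp (1 / θ) - Real.exp ε) * δ + (1 - Real.exp ε) * (1 / 2 - δ) := by
      rw [Finset.sum_range_succ, Finset.sum_range_succ, Finset.sum_range_zero, hπ]
      norm_num
    rw [hsum]
    constructor
    · intro h
      have hexpθ : Real.exp (1 / θ) = A := by
        field_simp [hAdef]
        rw [hAdef, add_div' _ _ _ (ne_of_gt hδ), eq_div_iff (ne_of_gt hδ)]; linear_combination h
      have h1θ : 1 / θ = Real.log A := by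
        rw [← Real.log_exp (1 / θ), hexpθ]
      rw [hθhat, ← h1θ]
      field_simp
    · intro h
      subst h
      rw [hθhat]
      have : (1 : ℝ) / (1 / Real.log A) = Real.log A := by
        field_simp
      rw [this, Real.exp_log hA0, hAdef]
      field_simp
      ring
  · rw [hθhat]
    exact one_div_lt_one_div_of_lt hε hLε
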